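/- Let q be a prime and consider the feasibility constraint 𝓘 on U = {(i,j) : 0 ≤ i ≤ q^q - 1, 0 ≤ j ≤ q-1} consisting of sets whose elements share a common first coordinate. Assign each element independent weight 1 with probability 1/q and 0 otherwise. Then the expected maximum weight of a feasible set is at least (1 - 1/e)·q, while every online algorithm (observing elements in any fixed order, accepting elements immediately subject to feasibility) has expected payoff less than 2. -/

import Mathlib

open MeasureTheory ProbabilityTheory
open scoped BigOperators


section Aux
open Finset
variable {ι : Type*} [Fintype ι]

/-- real-valued 0/1 vector of a boolean pattern -/
noncomputable def bv (x : ι → Bool) : ι → ℝ := fun e => if x e then 1 else 0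

lemma bv_nonneg (x : ι → Bool) (e : ι) : 0 ≤ bv x e := by
  unfold bv; split <;> norm_num

lemma bv_le_one (x : ι → Bool) (e : ι) : bv x e ≤ 1 := by
  unfold bv; split <;> norm_num

lemma aux_sum_prod [DecidableEq ι] (w : Bool → ℝ) (hw : w true + w false = 1) :
    ∑ x : ι → Bool, ∏ u, w (x u) = 1 := by
  have h := Finset.prod_univ_sum (fun _ : ι => (univ : Finset Bool)) (fun _ b => w b)
  rw [Fintype.piFinset_univ] at h
  rw [← h]
  have h2 : ∀ _i : ι, ∑ b : Bool, w b = 1 := by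
    intro i; rw [Fintype.sum_bool]; linarith
  calc ∏ _i : ι, ∑ b : Bool, w b = ∏ _i : ι, 1 := Finset.prod_congr rfl fun i _ => h2 i
    _ = 1 := Finset.prod_const_one

lemma aux_flip [DecidableEq ι] (w : Bool → ℝ) (hw : w true + w false = 1) (e : ι)
    (g : (ι → Bool) → ℝ) (hg : ∀ x b, g (Function.update x e b) = g x) :
    ∑ x : ι → Bool, (∏ u, w (x u)) * g x * (if x e then 1 else 0)
      = w true * ∑ x : ι → Bool, (∏ u, w (x u)) * g x := by
  classical
  set F : (ι → Bool) → ℝ := fun x => (∏ u ∈ univ.erase e, w (x u)) * g x with hF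
  have hprod : ∀ x : ι → Bool, (∏ u, w (x u)) = w (x e) * ∏ u ∈ univ.erase e, w (x u) :=
    fun x => (Finset.mul_prod_erase univ _ (mem_univ e)).symm
  have hbij : ∑ x ∈ univ.filter (fun x : ι → Bool => x e = true), F x
      = ∑ x ∈ univ.filter (fun x : ι → Bool => ¬ (x e = true)), F x := by
    refine Finset.sum_nbij' (fun x => Function.update x e false)
      (fun x => Function.update x e true) ?_ ?_ ?_ ?_ ?_
    · intro a ha; simp
    · intro a ha; simp
    · intro a ha
      rw [mem_filter] at ha
      funext u
      rcases eq_or_ne u e with rfl | hu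
      · simp [ha.2]
      · simp [Function.update_of_ne hu]
    · intro a ha
      rw [mem_filter] at ha
      funext u
      rcases eq_or_ne u e with rfl | hu
      · simp only [Bool.not_eq_true] at ha
        simp [ha]
      · simp [Function.update_of_ne hu]
    · intro a ha
      simp only [hF]
      rw [hg]
      congr 1
      refine Finset.prod_congr rfl fun u hu => ?_
      rw [Function.update_of_ne (Finset.ne_of_mem_erase hu)]
  have hsplit := Finset.sum_filter_add_sum_filter_not (univ : Finset (ι → Bool))
    (fun x => x e = true) (fun x => (∏ u, w (x u)) * g x * (if x e then 1 else 0))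
  have hsplit2 := Finset.sum_filter_add_sum_filter_not (univ : Finset (ι → Bool))
    (fun x => x e = true) (fun x => (∏ u, w (x u)) * g x)
  have hT : ∑ x ∈ univ.filter (fun x : ι → Bool => x e = true),
      (∏ u, w (x u)) * g x * (if x e then 1 else 0)
      = w true * ∑ x ∈ univ.filter (fun x : ι → Bool => x e = true), F x := by
    rw [Finset.mul_sum]
    refine Finset.sum_congr rfl fun x hx => ?_
    rw [mem_filter] at hx
    rw [hprod x, hx.2, hF]
    simp; ring
  have hFm : ∑ x ∈ univ.filter (fun x : ι → Bool => ¬ (x e = true)),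
      (∏ u, w (x u)) * g x * (if x e then 1 else 0) = 0 := by
    refine Finset.sum_eq_zero fun x hx => ?_
    rw [mem_filter] at hx
    simp [hx.2]
  have hT2 : ∑ x ∈ univ.filter (fun x : ι → Bool => x e = true),
      (∏ u, w (x u)) * g x
      = w true * ∑ x ∈ univ.filter (fun x : ι → Bool => x e = true), F x := by
    rw [Finset.mul_sum]
    refine Finset.sum_congr rfl fun x hx => ?_
    rw [mem_filter] at hx
    rw [hprod x, hx.2, hF]; ring
  have hF2 : ∑ x ∈ univ.filter (fun x : ι → Bool => ¬ (x e = true)),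
      (∏ u, w (x u)) * g x
      = w false * ∑ x ∈ univ.filter (fun x : ι → Bool => x e = true), F x := by
    rw [hbij, Finset.mul_sum]
    refine Finset.sum_congr rfl fun x hx => ?_
    rw [mem_filter, Bool.not_eq_true] at hx
    rw [hprod x, hx.2, hF]; ring
  rw [← hsplit, ← hsplit2, hT, hFm, hT2, hF2]
  have hwf : w false = 1 - w true := by linarith
  rw [hwf]; ring


variable {Ω : Type*} [MeasurableSpace Ω] {μ : Measure Ω} {W : ι → Ω → ℝ}

/-- the atom of pattern `x` -/
def pat (W : ι → Ω → ℝ) (x : ι → Bool) : Set Ω := {ω | ∀ e, W e ω = bv x e}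

lemma pat_meas [Countable ι] (hmeas : ∀ e, Measurable (W e)) (x : ι → Bool) :
    MeasurableSet (pat W x) := by
  have : pat W x = ⋂ e, W e ⁻¹' {bv x e} := by
    ext ω; simp [pat, Set.mem_iInter]
  rw [this]
  exact MeasurableSet.iInter fun e => (hmeas e) (measurableSet_singleton _)

open Classical in
/-- the pattern of a sample -/
noncomputable def th (W : ι → Ω → ℝ) (ω : Ω) : ι → Bool :=
  fun e => if W e ω = 1 then true else false

lemma mem_pat_iff (hBer : ∀ e ω, W e ω = 0 ∨ W e ω = 1) (ω : Ω) (x : ι → Bool) :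
    ω ∈ pat W x ↔ x = th W ω := by
  classical
  constructor
  · intro h
    funext e
    have he := h e
    unfold bv at he
    unfold th
    by_cases hx : x e
    · rw [if_pos hx] at he
      simp [hx, he]
    · simp only [hx, if_false] at he
      have : ¬ (W e ω = 1) := by rw [he]; norm_num
      simp [hx, this]
  · rintro rfl e
    unfold th bv
    rcases hBer e ω with h0 | h1
    · have : ¬ (W e ω = 1) := by rw [h0]; norm_num
      simp [this, h0]
    · simp [h1]

lemma integral_pat [DecidableEq ι] [IsProbabilityMeasure μ] (hmeas : ∀ e, Measurable (W e))
    (hBer : ∀ e ω, W e ω = 0 ∨ W e ω = 1) (f : (ι → ℝ) → ℝ) :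
    ∫ ω, f (fun e => W e ω) ∂μ
      = ∑ x : ι → Bool, (μ (pat W x)).toReal * f (bv x) := by
  classical
  have hpt : ∀ ω, f (fun e => W e ω)
      = ∑ x : ι → Bool, (pat W x).indicator (fun _ => f (bv x)) ω := by
    intro ω
    rw [Finset.sum_eq_single (th W ω)]
    · have hmem : ω ∈ pat W (th W ω) := (mem_pat_iff hBer ω _).2 rfl
      rw [Set.indicator_of_mem hmem]
      congr 1
      funext e
      exact hmem e
    · intro x _ hx
      rw [Set.indicator_of_notMem]
      intro hmem; exact hx ((mem_pat_iff hBer ω x).1 hmem)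
    · simp
  refine (integral_congr_ae (Filter.Eventually.of_forall hpt)).trans ?_
  rw [integral_finset_sum]
  · exact Finset.sum_congr rfl fun x _ => by
      rw [integral_indicator_const _ (pat_meas hmeas x), smul_eq_mul]; rfl
  · intro x _
    exact (integrable_const _).indicator (pat_meas hmeas x)

lemma pat_measure [DecidableEq ι]
    (hindep : iIndepFun W μ) (x : ι → Bool) :
    μ (pat W x) = ∏ e : ι, μ {ω | W e ω = bv x e} := by
  have h := (iIndepFun_iff_measure_inter_preimage_eq_mul.1 hindep) Finset.univ
      (sets := fun e => ({bv x e} : Set ℝ)) (fun i _ => measurableSet_singleton _)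
  have hset : pat W x = ⋂ e ∈ Finset.univ, W e ⁻¹' {bv x e} := by
    ext ω; simp [pat]
  rw [hset, h]
  rfl

end Aux

/-- Lower-bound instance for matroid intersections: on
`U = Fin (q^q) × Fin q` with i.i.d. Bernoulli(1/q) weights and feasible sets being those whose
elements share a common first coordinate, the prophet earns at least `(1 - 1/e)·q` in
expectation, while every online algorithm (for any fixed presentation order) earns less
than `2` in expectation. -/
theorem stmt17 (q : ℕ) (hq : q.Prime) [NeZero (q ^ q)]
    {Ω : Type*} [MeasurableSpace Ω] (μ : Measure Ω) [IsProbabilityMeasure μ]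
    (W : Fin (q ^ q) × Fin q → Ω → ℝ)
    (hmeas : ∀ e, Measurable (W e))
    (hindep : iIndepFun W μ)
    (hBernoulli : ∀ e ω, W e ω = 0 ∨ W e ω = 1)
    (hone : ∀ e, μ {ω | W e ω = 1} = ENNReal.ofReal (1 / q)) :
    -- the prophet's expected value is at least (1 - 1/e)·q
    ((1 - 1 / Real.exp 1) * q ≤
      ∫ ω, Finset.univ.sup' Finset.univ_nonempty
        (fun i : Fin (q ^ q) => ∑ j : Fin q, W (i, j) ω) ∂μ) ∧
    -- every online algorithm, for every fixed presentation order, earns less than 2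
    (∀ (N : ℕ) (ord : Fin N ≃ (Fin (q ^ q) × Fin q))
        (A : ((Fin (q ^ q) × Fin q) → ℝ) → Set (Fin (q ^ q) × Fin q)),
      -- online: the decision about the k-th presented element depends only on the
      -- weights of the elements presented so far
      (∀ (v₁ v₂ : (Fin (q ^ q) × Fin q) → ℝ) (k : Fin N),
        (∀ m, m ≤ k → v₁ (ord m) = v₂ (ord m)) → (ord k ∈ A v₁ ↔ ord k ∈ A v₂)) →
      -- feasibility: all accepted elements share the same first coordinate
      (∀ v, ∀ a ∈ A v, ∀ b ∈ A v, a.1 = b.1) →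
      (∫ ω, ∑ᶠ e ∈ A (fun e => W e ω), W e ω ∂μ) < 2) := by
  classical
  have hq2 : 2 ≤ q := hq.two_le
  have hq0 : (0:ℝ) < q := by exact_mod_cast lt_of_lt_of_le two_pos hq2
  set p : ℝ := 1 / q with hp
  have hp0 : 0 < p := by rw [hp]; positivity
  have hp1 : p ≤ 1 := by rw [hp, div_le_one hq0]; exact_mod_cast hq.one_lt.le
  set w : Bool → ℝ := fun b => if b then p else 1 - p with hwdef
  have hw : w true + w false = 1 := by simp [hwdef]
  have hwt : w true = p := by simp [hwdef]
  have hw0 : ∀ b, 0 ≤ w b := by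
    intro b; cases b <;> simp [hwdef] <;> linarith
  have hqp : (q:ℝ) * p = 1 := by rw [hp]; field_simp
  -- measure of each atom is the product of Bernoulli weights
  have hzero : ∀ e, μ {ω | W e ω = (0:ℝ)} = 1 - ENNReal.ofReal p := by
    intro e
    have hc : {ω | W e ω = (0:ℝ)} = {ω | W e ω = 1}ᶜ := by
      ext ω
      simp only [Set.mem_setOf_eq, Set.mem_compl_iff]
      constructor
      · intro h h1; rw [h] at h1; norm_num at h1
      · intro h; exact (hBernoulli e ω).resolve_right h
    have hms : MeasurableSet {ω | W e ω = (1:ℝ)} := (hmeas e) (measurableSet_singleton 1)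
    rw [hc, prob_compl_eq_one_sub hms, hone e, hp]
  have hPr : ∀ x : Fin (q ^ q) × Fin q → Bool, (μ (pat W x)).toReal = ∏ u, w (x u) := by
    intro x
    rw [pat_measure hindep x, ENNReal.toReal_prod]
    refine Finset.prod_congr rfl fun u _ => ?_
    by_cases hx : x u
    · have hb : bv x u = 1 := by simp [bv, hx]
      rw [hb, hone u, ENNReal.toReal_ofReal hp0.le]
      simp [hwdef, hx]
    · have hb : bv x u = 0 := by simp [bv, hx]
      rw [hb, hzero u, ENNReal.toReal_sub_of_le (ENNReal.ofReal_le_one.2 hp1) ENNReal.one_ne_top,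
        ENNReal.toReal_one, ENNReal.toReal_ofReal hp0.le]
      simp [hwdef, hx]
  have hPr0 : ∀ x : Fin (q ^ q) × Fin q → Bool, 0 ≤ ∏ u, w (x u) :=
    fun x => Finset.prod_nonneg fun u _ => hw0 _
  have hPrsum : ∑ x : Fin (q ^ q) × Fin q → Bool, ∏ u, w (x u) = 1 := aux_sum_prod w hw
  constructor
  · -- PART 1 : prophet bound
    have hint : (∫ ω, Finset.univ.sup' Finset.univ_nonempty
          (fun i : Fin (q ^ q) => ∑ j : Fin q, W (i, j) ω) ∂μ)
        = ∑ x : Fin (q ^ q) × Fin q → Bool, (μ (pat W x)).toReal *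
            (Finset.univ.sup' Finset.univ_nonempty
              (fun i : Fin (q ^ q) => ∑ j : Fin q, bv x (i, j))) :=
      integral_pat hmeas hBernoulli
        (fun v => Finset.univ.sup' Finset.univ_nonempty
          (fun i : Fin (q ^ q) => ∑ j : Fin q, v (i, j)))
    rw [hint]
    have hstep : ∀ x : Fin (q ^ q) × Fin q → Bool,
        (if (∃ i, ∀ j, x (i, j) = true) then (q:ℝ) else 0)
          ≤ Finset.univ.sup' Finset.univ_nonempty
              (fun i : Fin (q ^ q) => ∑ j : Fin q, bv x (i, j)) := by
      intro x
      split_ifs with hG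
      · obtain ⟨i, hi⟩ := hG
        have hsum : ∑ j : Fin q, bv x (i, j) = (q:ℝ) := by
          rw [Finset.sum_congr rfl (fun j _ => show bv x (i, j) = 1 by simp [bv, hi j])]
          simp
        calc (q:ℝ) = ∑ j : Fin q, bv x (i, j) := hsum.symm
          _ ≤ _ := Finset.le_sup' (fun i : Fin (q ^ q) => ∑ j : Fin q, bv x (i, j))
              (Finset.mem_univ i)
      · have hpos : 0 < q ^ q := Nat.pos_of_ne_zero (NeZero.ne _)
        have := Finset.le_sup' (fun i : Fin (q ^ q) => ∑ j : Fin q, bv x (i, j))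
          (Finset.mem_univ (⟨0, hpos⟩ : Fin (q ^ q)))
        refine le_trans ?_ this
        exact Finset.sum_nonneg fun j _ => bv_nonneg x _
    -- bad-event probability
    have hbad : ∑ x ∈ Finset.univ.filter
          (fun x : Fin (q ^ q) × Fin q → Bool => ¬ ∃ i, ∀ j, x (i, j) = true), ∏ u, w (x u)
        = (1 - p ^ q) ^ (q ^ q) := by
      rw [Finset.sum_filter]
      have hrw : ∀ x : Fin (q ^ q) × Fin q → Bool,
          (if (¬ ∃ i, ∀ j, x (i, j) = true) then ∏ u, w (x u) else 0)
            = ∏ i : Fin (q ^ q), ((∏ j : Fin q, w (x (i, j)))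
                * (if (∀ j, x (i, j) = true) then (0:ℝ) else 1)) := by
        intro x
        rw [Finset.prod_mul_distrib]
        have hpp : ∏ u : Fin (q ^ q) × Fin q, w (x u)
            = ∏ i : Fin (q ^ q), ∏ j : Fin q, w (x (i, j)) := by
          rw [Fintype.prod_prod_type]
        by_cases hG : ∃ i, ∀ j, x (i, j) = true
        · rw [if_neg (not_not_intro hG)]
          obtain ⟨i, hi⟩ := hG
          have hz2 : (∏ i : Fin (q ^ q), (if (∀ j, x (i, j) = true) then (0:ℝ) else 1)) = 0 :=
            Finset.prod_eq_zero (Finset.mem_univ i) (if_pos hi)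
          rw [hz2, mul_zero]
        · rw [if_pos hG, hpp]
          have h1 : ∀ i : Fin (q ^ q), (if (∀ j, x (i, j) = true) then (0:ℝ) else 1) = 1 :=
            fun i => if_neg (fun h => hG ⟨i, h⟩)
          rw [Finset.prod_congr rfl (fun i _ => h1 i), Finset.prod_const_one, mul_one]
      rw [Finset.sum_congr rfl fun x _ => hrw x]
      have hcur := Equiv.sum_comp (Equiv.curry (Fin (q ^ q)) (Fin q) Bool).symm
        (fun x : Fin (q ^ q) × Fin q → Bool => ∏ i : Fin (q ^ q),
          ((∏ j : Fin q, w (x (i, j))) * (if (∀ j, x (i, j) = true) then (0:ℝ) else 1)))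
      rw [← hcur]
      have hy : ∀ y : Fin (q ^ q) → Fin q → Bool,
          (∏ i : Fin (q ^ q), ((∏ j : Fin q, w (((Equiv.curry (Fin (q ^ q)) (Fin q) Bool).symm y) (i, j)))
              * (if (∀ j, ((Equiv.curry (Fin (q ^ q)) (Fin q) Bool).symm y) (i, j) = true) then (0:ℝ) else 1)))
            = ∏ i : Fin (q ^ q), ((∏ j : Fin q, w (y i j))
              * (if (∀ j, y i j = true) then (0:ℝ) else 1)) := by
        intro y; rfl
      rw [Finset.sum_congr rfl fun y _ => hy y]
      have hfac : ∑ y : Fin (q ^ q) → Fin q → Bool, ∏ i : Fin (q ^ q),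
            ((∏ j : Fin q, w (y i j)) * (if (∀ j, y i j = true) then (0:ℝ) else 1))
          = ∏ _i : Fin (q ^ q), (∑ z : Fin q → Bool,
            ((∏ j : Fin q, w (z j)) * (if (∀ j, z j = true) then (0:ℝ) else 1))) := by
        rw [Finset.prod_univ_sum, Fintype.piFinset_univ]
      rw [hfac]
      have hz : ∑ z : Fin q → Bool,
          ((∏ j : Fin q, w (z j)) * (if (∀ j, z j = true) then (0:ℝ) else 1)) = 1 - p ^ q := by
        have h1 : ∀ z : Fin q → Bool,
            (∏ j : Fin q, w (z j)) * (if (∀ j, z j = true) then (0:ℝ) else 1)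
              = (∏ j : Fin q, w (z j)) - (if (∀ j, z j = true) then (∏ j : Fin q, w (z j)) else 0) := by
          intro z; split_ifs <;> ring
        have h2 : ∑ z : Fin q → Bool, (if (∀ j, z j = true) then (∏ j : Fin q, w (z j)) else 0)
            = p ^ q := by
          rw [Finset.sum_eq_single (fun _ : Fin q => true)]
          · rw [if_pos (fun j => rfl)]
            simp [hwdef]
          · intro z _ hz
            exact if_neg (fun h => hz (funext fun j => h j))
          · intro h; exact absurd (Finset.mem_univ _) h
        rw [Finset.sum_congr rfl fun z _ => h1 z, Finset.sum_sub_distrib,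
          aux_sum_prod w hw, h2]
      rw [hz, Finset.prod_const, Finset.card_univ, Fintype.card_fin]
    -- arithmetic: (1 - p^q)^(q^q) ≤ 1/e
    have hnn0 : (0:ℝ) < ((q ^ q : ℕ) : ℝ) := by
      exact_mod_cast Nat.pos_of_ne_zero (NeZero.ne (q ^ q))
    have hpq : p ^ q = 1 / ((q ^ q : ℕ) : ℝ) := by
      rw [hp, div_pow, one_pow, Nat.cast_pow]
    have hexpb : (1 - p ^ q) ^ (q ^ q) ≤ 1 / Real.exp 1 := by
      rw [hpq]
      set nn : ℝ := ((q ^ q : ℕ) : ℝ) with hnn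
      have h1n : 1 / nn ≤ 1 := by
        rw [div_le_one hnn0, hnn]
        exact_mod_cast Nat.one_le_iff_ne_zero.2 (NeZero.ne (q ^ q))
      have htub : 1 - 1 / nn ≤ Real.exp (-(1 / nn)) := by
        have := Real.add_one_le_exp (-(1 / nn)); linarith
      have h0 : 0 ≤ 1 - 1 / nn := by linarith
      have hpow : (1 - 1 / nn) ^ (q ^ q) ≤ Real.exp (-(1 / nn)) ^ (q ^ q) :=
        pow_le_pow_left₀ h0 htub _
      have hexp : Real.exp (-(1 / nn)) ^ (q ^ q) = Real.exp (-1) := by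
        rw [← Real.exp_nat_mul]
        congr 1
        rw [hnn]
        field_simp
      rw [hexp] at hpow
      rw [Real.exp_neg, ← one_div] at hpow
      exact hpow
    -- combine
    have hGsum : 1 - 1 / Real.exp 1 ≤ ∑ x ∈ Finset.univ.filter
        (fun x : Fin (q ^ q) × Fin q → Bool => ∃ i, ∀ j, x (i, j) = true), ∏ u, w (x u) := by
      have hsp := Finset.sum_filter_add_sum_filter_not
        (Finset.univ : Finset (Fin (q ^ q) × Fin q → Bool))
        (fun x => ∃ i, ∀ j, x (i, j) = true) (fun x => ∏ u, w (x u))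
      rw [hPrsum] at hsp
      rw [hbad] at hsp
      linarith [hexpb]
    calc (1 - 1 / Real.exp 1) * (q:ℝ)
        ≤ (∑ x ∈ Finset.univ.filter
            (fun x : Fin (q ^ q) × Fin q → Bool => ∃ i, ∀ j, x (i, j) = true),
            ∏ u, w (x u)) * (q:ℝ) := by
          refine mul_le_mul_of_nonneg_right hGsum hq0.le
      _ = ∑ x : Fin (q ^ q) × Fin q → Bool,
            (∏ u, w (x u)) * (if (∃ i, ∀ j, x (i, j) = true) then (q:ℝ) else 0) := by
          rw [Finset.sum_mul, Finset.sum_filter]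
          exact Finset.sum_congr rfl fun x _ => by split_ifs <;> simp
      _ ≤ ∑ x : Fin (q ^ q) × Fin q → Bool,
            (∏ u, w (x u)) * (Finset.univ.sup' Finset.univ_nonempty
              (fun i : Fin (q ^ q) => ∑ j : Fin q, bv x (i, j))) :=
          Finset.sum_le_sum fun x _ => mul_le_mul_of_nonneg_left (hstep x) (hPr0 x)
      _ = ∑ x : Fin (q ^ q) × Fin q → Bool, (μ (pat W x)).toReal *
            (Finset.univ.sup' Finset.univ_nonempty
              (fun i : Fin (q ^ q) => ∑ j : Fin q, bv x (i, j))) :=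
          Finset.sum_congr rfl fun x _ => by rw [hPr]
  · -- PART 2 : online bound
    intro N ord A honline hfeas
    have hint : (∫ ω, ∑ᶠ e ∈ A (fun e => W e ω), W e ω ∂μ)
        = ∑ x : Fin (q ^ q) × Fin q → Bool,
            (μ (pat W x)).toReal * (∑ᶠ e ∈ A (bv x), bv x e) :=
      integral_pat hmeas hBernoulli (fun v => ∑ᶠ e ∈ A v, v e)
    rw [hint]
    set Ek : Fin N → (Fin (q ^ q) × Fin q → Bool) → Prop :=
      fun k x => ord k ∈ A (bv x) ∧ ∀ m, m < k → ord m ∉ A (bv x) with hEk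
    set L : Fin N → Finset (Fin N) :=
      fun k => Finset.univ.filter (fun m => k < m ∧ (ord m).1 = (ord k).1) with hL
    -- |L k| ≤ q - 1
    have hLcard : ∀ k, ((L k).card : ℝ) ≤ (q:ℝ) - 1 := by
      intro k
      have hsub : L k ⊆ (Finset.univ.filter (fun m => (ord m).1 = (ord k).1)).erase k := by
        intro m hm
        rw [hL] at hm
        simp only [Finset.mem_filter, Finset.mem_univ, true_and] at hm
        exact Finset.mem_erase.2 ⟨ne_of_gt hm.1, by simp [hm.2]⟩
      have hcard1 : (Finset.univ.filter (fun m => (ord m).1 = (ord k).1)).card ≤ q := by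
        have hinj : Set.InjOn (fun m => (ord m).2)
            (Finset.univ.filter (fun m => (ord m).1 = (ord k).1)) := by
          intro a ha b hb hab
          simp only [Finset.coe_filter, Set.mem_setOf_eq] at ha hb
          apply ord.injective
          exact Prod.ext (ha.2.trans hb.2.symm) hab
        have := Finset.card_le_card_of_injOn (fun m => (ord m).2)
          (fun m _ => Finset.mem_univ _) hinj
        simpa using this
      have hkmem : k ∈ Finset.univ.filter (fun m => (ord m).1 = (ord k).1) := by simp
      have hnat : (L k).card ≤ q - 1 := by
        calc (L k).card ≤ _ := Finset.card_le_card hsub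
          _ = _ - 1 := Finset.card_erase_of_mem hkmem
          _ ≤ q - 1 := Nat.sub_le_sub_right hcard1 1
      calc ((L k).card : ℝ) ≤ ((q - 1 : ℕ) : ℝ) := Nat.cast_le.2 hnat
        _ = (q:ℝ) - 1 := by rw [Nat.cast_sub hq.one_lt.le]; norm_num
    -- pointwise payoff bound
    have hpayoff : ∀ x : Fin (q ^ q) × Fin q → Bool,
        (∑ᶠ e ∈ A (bv x), bv x e)
          ≤ ∑ k : Fin N, (if Ek k x then (1 + ∑ m ∈ L k, bv x (ord m)) else 0) := by
      intro x
      have hfin : (A (bv x)).Finite := Set.toFinite _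
      have hfs : (∑ᶠ e ∈ A (bv x), bv x e) = ∑ e ∈ hfin.toFinset, bv x e := by
        rw [← finsum_mem_coe_finset, Set.Finite.coe_toFinset]
      rw [hfs]
      by_cases hne : hfin.toFinset.Nonempty
      · obtain ⟨e0, he0⟩ := hne
        have he0' : e0 ∈ A (bv x) := hfin.mem_toFinset.1 he0
        set K : Finset (Fin N) := Finset.univ.filter (fun m => ord m ∈ A (bv x)) with hK
        have hKne : K.Nonempty := ⟨ord.symm e0, by simp [hK, he0']⟩
        set k0 := K.min' hKne with hk0
        have hk0acc : ord k0 ∈ A (bv x) :=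
          (Finset.mem_filter.1 (K.min'_mem hKne)).2
        have hmin : ∀ m : Fin N, ord m ∈ A (bv x) → k0 ≤ m := fun m hm =>
          K.min'_le m (by simp [hK, hm])
        have hE : Ek k0 x := by
          rw [hEk]
          exact ⟨hk0acc, fun m hmlt hacc => absurd (hmin m hacc) (not_le.2 hmlt)⟩
        have hsum : (∑ k : Fin N, if Ek k x then (1 + ∑ m ∈ L k, bv x (ord m)) else 0)
            = 1 + ∑ m ∈ L k0, bv x (ord m) := by
          rw [Finset.sum_eq_single k0]
          · rw [if_pos hE]
          · intro k _ hkne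
            rw [if_neg]
            rw [hEk]
            rintro ⟨hacck, hstrict⟩
            rcases lt_or_gt_of_ne hkne with hlt | hgt
            · exact absurd (hmin k hacck) (not_le.2 hlt)
            · exact hstrict k0 hgt hk0acc
          · intro h; exact absurd (Finset.mem_univ k0) h
        rw [hsum]
        have hmem0 : ord k0 ∈ hfin.toFinset := hfin.mem_toFinset.2 hk0acc
        rw [← Finset.sum_erase_add _ _ hmem0]
        have h1 : bv x (ord k0) ≤ 1 := bv_le_one x _
        have h2 : ∑ e ∈ hfin.toFinset.erase (ord k0), bv x e
            ≤ ∑ m ∈ L k0, bv x (ord m) := by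
          have himg : ∑ m ∈ L k0, bv x (ord m) = ∑ e ∈ (L k0).image ord, bv x e :=
            (Finset.sum_image (fun a _ b _ h => ord.injective h)).symm
          rw [himg]
          refine Finset.sum_le_sum_of_subset_of_nonneg ?_ (fun e _ _ => bv_nonneg x e)
          intro e he
          rw [Finset.mem_erase] at he
          obtain ⟨hne', heA⟩ := he
          have heA' : e ∈ A (bv x) := hfin.mem_toFinset.1 heA
          have haccm : ord (ord.symm e) ∈ A (bv x) := by
            rwa [Equiv.apply_symm_apply]
          have hk0le : k0 ≤ ord.symm e := hmin _ haccm
          have hne2 : ord.symm e ≠ k0 := by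
            intro h
            apply hne'
            rw [← Equiv.apply_symm_apply ord e, h]
          refine Finset.mem_image.2 ⟨ord.symm e, ?_, Equiv.apply_symm_apply _ _⟩
          rw [hL]
          simp only [Finset.mem_filter, Finset.mem_univ, true_and]
          refine ⟨lt_of_le_of_ne hk0le (Ne.symm hne2), ?_⟩
          rw [Equiv.apply_symm_apply]
          exact hfeas (bv x) _ heA' _ hk0acc
        linarith
      · rw [Finset.not_nonempty_iff_eq_empty] at hne
        rw [hne, Finset.sum_empty]
        refine Finset.sum_nonneg fun k _ => ?_
        split_ifs with h
        · have hnn : 0 ≤ ∑ m ∈ L k, bv x (ord m) :=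
            Finset.sum_nonneg fun m _ => bv_nonneg x _
          linarith
        · exact le_refl 0
    -- invariance of Ek under updating a later coordinate
    have hinv : ∀ (k m : Fin N), k < m → ∀ (x : Fin (q ^ q) × Fin q → Bool) (b : Bool),
        Ek k (Function.update x (ord m) b) ↔ Ek k x := by
      intro k m hkm x b
      have hAiff : ∀ j : Fin N, j ≤ k →
          (ord j ∈ A (bv (Function.update x (ord m) b)) ↔ ord j ∈ A (bv x)) := by
        intro j hj
        apply honline
        intro m' hm'
        have hne : ord m' ≠ ord m := by
          intro h
          have hmm : m' = m := ord.injective h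
          rw [hmm] at hm'
          exact absurd (hm'.trans hj) (not_le.2 hkm)
        show bv (Function.update x (ord m) b) (ord m') = bv x (ord m')
        simp only [bv]
        rw [Function.update_of_ne hne]
      rw [hEk]
      constructor
      · rintro ⟨h1, h2⟩
        exact ⟨(hAiff k le_rfl).1 h1, fun m' hm' hc => h2 m' hm' ((hAiff m' hm'.le).2 hc)⟩
      · rintro ⟨h1, h2⟩
        exact ⟨(hAiff k le_rfl).2 h1, fun m' hm' hc => h2 m' hm' ((hAiff m' hm'.le).1 hc)⟩
    -- per-k bound
    have hk_bound : ∀ k : Fin N,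
        (∑ x : Fin (q ^ q) × Fin q → Bool,
          (∏ u, w (x u)) * (if Ek k x then (1 + ∑ m ∈ L k, bv x (ord m)) else 0))
        ≤ (∑ x : Fin (q ^ q) × Fin q → Bool,
            (∏ u, w (x u)) * (if Ek k x then (1:ℝ) else 0)) * (2 - p) := by
      intro k
      have hEknn : 0 ≤ ∑ x : Fin (q ^ q) × Fin q → Bool,
          (∏ u, w (x u)) * (if Ek k x then (1:ℝ) else 0) :=
        Finset.sum_nonneg fun x _ => mul_nonneg (hPr0 x) (by split_ifs <;> norm_num)
      have hsplit : ∀ x : Fin (q ^ q) × Fin q → Bool,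
          (∏ u, w (x u)) * (if Ek k x then (1 + ∑ m ∈ L k, bv x (ord m)) else 0)
            = (∏ u, w (x u)) * (if Ek k x then (1:ℝ) else 0)
              + ∑ m ∈ L k, (∏ u, w (x u)) * (if Ek k x then (1:ℝ) else 0)
                  * (if x (ord m) then (1:ℝ) else 0) := by
        intro x
        by_cases h : Ek k x
        · rw [if_pos h, if_pos h]
          rw [mul_add, mul_one, Finset.mul_sum]
          simp [bv]
        · rw [if_neg h, if_neg h]
          simp
      rw [Finset.sum_congr rfl fun x _ => hsplit x, Finset.sum_add_distrib, Finset.sum_comm]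
      have hflip : ∀ m ∈ L k,
          (∑ x : Fin (q ^ q) × Fin q → Bool,
            (∏ u, w (x u)) * (if Ek k x then (1:ℝ) else 0) * (if x (ord m) then (1:ℝ) else 0))
          = p * ∑ x : Fin (q ^ q) × Fin q → Bool,
              (∏ u, w (x u)) * (if Ek k x then (1:ℝ) else 0) := by
        intro m hm
        have hkm : k < m := by
          rw [hL] at hm
          simp only [Finset.mem_filter, Finset.mem_univ, true_and] at hm
          exact hm.1
        rw [← hwt]
        exact aux_flip w hw (ord m) (fun x => if Ek k x then (1:ℝ) else 0)
          (fun x b => if_congr (hinv k m hkm x b) rfl rfl)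
      rw [Finset.sum_congr rfl hflip, Finset.sum_const, nsmul_eq_mul]
      have hcoef : (0:ℝ) ≤ 1 - p - ((L k).card : ℝ) * p := by
        nlinarith [hLcard k, hp0.le, hqp]
      nlinarith [mul_nonneg hEknn hcoef]
    -- sum over k of Pk is at most 1
    have hunique : ∀ x : Fin (q ^ q) × Fin q → Bool,
        (∑ k : Fin N, if Ek k x then (1:ℝ) else 0) ≤ 1 := by
      intro x
      rw [Finset.sum_boole]
      have hcard : (Finset.univ.filter (fun k => Ek k x)).card ≤ 1 := by
        refine Finset.card_le_one.2 fun a ha b hb => ?_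
        simp only [Finset.mem_filter, hEk] at ha hb
        by_contra hab
        rcases lt_or_gt_of_ne hab with h | h
        · exact hb.2.2 a h ha.2.1
        · exact ha.2.2 b h hb.2.1
      exact_mod_cast hcard
    have hPksum : (∑ k : Fin N, ∑ x : Fin (q ^ q) × Fin q → Bool,
        (∏ u, w (x u)) * (if Ek k x then (1:ℝ) else 0)) ≤ 1 := by
      rw [Finset.sum_comm]
      calc ∑ x : Fin (q ^ q) × Fin q → Bool, ∑ k : Fin N,
            (∏ u, w (x u)) * (if Ek k x then (1:ℝ) else 0)
          = ∑ x : Fin (q ^ q) × Fin q → Bool,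
              (∏ u, w (x u)) * (∑ k : Fin N, if Ek k x then (1:ℝ) else 0) :=
            Finset.sum_congr rfl fun x _ => (Finset.mul_sum _ _ _).symm
        _ ≤ ∑ x : Fin (q ^ q) × Fin q → Bool, (∏ u, w (x u)) * 1 :=
            Finset.sum_le_sum fun x _ =>
              mul_le_mul_of_nonneg_left (hunique x) (hPr0 x)
        _ = 1 := by
            rw [Finset.sum_congr rfl fun x _ => mul_one _]
            exact hPrsum
    -- assemble
    calc ∑ x : Fin (q ^ q) × Fin q → Bool,
          (μ (pat W x)).toReal * (∑ᶠ e ∈ A (bv x), bv x e)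
        = ∑ x : Fin (q ^ q) × Fin q → Bool,
            (∏ u, w (x u)) * (∑ᶠ e ∈ A (bv x), bv x e) :=
          Finset.sum_congr rfl fun x _ => by rw [hPr]
      _ ≤ ∑ x : Fin (q ^ q) × Fin q → Bool, (∏ u, w (x u)) *
            (∑ k : Fin N, if Ek k x then (1 + ∑ m ∈ L k, bv x (ord m)) else 0) := by
          refine Finset.sum_le_sum fun x _ => mul_le_mul_of_nonneg_left (hpayoff x) (hPr0 x)
      _ = ∑ x : Fin (q ^ q) × Fin q → Bool, ∑ k : Fin N, (∏ u, w (x u)) *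
            (if Ek k x then (1 + ∑ m ∈ L k, bv x (ord m)) else 0) :=
          Finset.sum_congr rfl fun x _ => Finset.mul_sum _ _ _
      _ = ∑ k : Fin N, ∑ x : Fin (q ^ q) × Fin q → Bool, (∏ u, w (x u)) *
            (if Ek k x then (1 + ∑ m ∈ L k, bv x (ord m)) else 0) := Finset.sum_comm
      _ ≤ ∑ k : Fin N, (∑ x : Fin (q ^ q) × Fin q → Bool,
            (∏ u, w (x u)) * (if Ek k x then (1:ℝ) else 0)) * (2 - p) :=
          Finset.sum_le_sum fun k _ => hk_bound k
      _ = (∑ k : Fin N, ∑ x : Fin (q ^ q) × Fin q → Bool,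
            (∏ u, w (x u)) * (if Ek k x then (1:ℝ) else 0)) * (2 - p) :=
          (Finset.sum_mul _ _ _).symm
      _ ≤ 1 * (2 - p) := by
          refine mul_le_mul_of_nonneg_right hPksum (by linarith)
      _ < 2 := by linarith
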